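/- Define the norm ‖v‖_T^2 = sup over nonempty S ⊆ [d] of (log(2d/|S|))^4 · ∑_{j∈S} v_j^2 for v ∈ R^d. Then for a standard Gaussian vector w ~ N(0, I_d), E[‖w‖_T] ≤ C√d for an absolute constant C. -/

import Mathlib

open MeasureTheory ProbabilityTheory
open scoped NNReal ENNReal

/-- The square of the norm `‖·‖_T`:
`‖v‖_T² = sup_{∅ ≠ S ⊆ [d]} (log(2d/|S|))⁴ ∑_{j∈S} v j²`. -/
noncomputable def TnormSq (d : ℕ) (v : Fin d → ℝ) : ℝ :=
  ⨆ S : {S : Finset (Fin d) // S.Nonempty},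
    (Real.log (2 * d / (S : Finset (Fin d)).card)) ^ 4 * ∑ j ∈ (S : Finset (Fin d)), v j ^ 2

/-- The norm `‖·‖_T` on `ℝ^d`. -/
noncomputable def Tnorm (d : ℕ) (v : Fin d → ℝ) : ℝ :=
  Real.sqrt (TnormSq d v)

/-- `x ≤ 4 e^{(x-t)/4} + t`. -/
lemma aux_le_exp (x t : ℝ) : x ≤ 4 * Real.exp ((x - t) / 4) + t := by
  nlinarith [Real.add_one_le_exp ((x - t) / 4)]

lemma aux_L4 {L : ℝ} (hL : 0 ≤ L) : L ^ 4 * Real.exp (-(5 * L)) ≤ 1 := by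
  have h1 : L ≤ Real.exp L := by nlinarith [Real.add_one_le_exp L]
  have h2 : L ^ 4 ≤ Real.exp L ^ 4 := pow_le_pow_left₀ hL h1 4
  have h3 : Real.exp L ^ 4 * Real.exp (-(5 * L)) = Real.exp (-L) := by
    rw [← Real.exp_nat_mul, ← Real.exp_add]; ring_nf
  have h4 : Real.exp (-L) ≤ 1 := Real.exp_le_one_iff.mpr (by linarith)
  nlinarith [Real.exp_pos (-(5*L))]

lemma aux_kL5 {d k : ℕ} (hk : 1 ≤ k) (hkd : k ≤ d) :
    (k : ℝ) * Real.log (2 * d / k) ^ 5 ≤ 6250 * d := by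
  have hk0 : (0:ℝ) < k := by exact_mod_cast hk
  have hd0 : (0:ℝ) < d := lt_of_lt_of_le hk0 (by exact_mod_cast hkd)
  set u : ℝ := 2 * d / k with hu
  have hu0 : 0 < u := by positivity
  have hu1 : 1 ≤ u := by
    rw [hu, le_div_iff₀ hk0]; nlinarith [(show (k:ℝ) ≤ d by exact_mod_cast hkd)]
  set r : ℝ := u ^ ((1:ℝ)/5) with hr
  have hr0 : 0 < r := Real.rpow_pos_of_pos hu0 _
  have hr1 : 1 ≤ r := Real.one_le_rpow hu1 (by norm_num)
  have hlog : Real.log u = 5 * Real.log r := by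
    rw [hr, Real.log_rpow hu0]; ring
  have hlr : Real.log r ≤ r := (Real.log_le_sub_one_of_pos hr0).trans (by linarith)
  have hlr0 : 0 ≤ Real.log r := Real.log_nonneg hr1
  have hr5 : r ^ (5:ℕ) = u := by
    rw [hr, ← Real.rpow_natCast (u ^ ((1:ℝ)/5)) 5, ← Real.rpow_mul hu0.le]; norm_num
  have h5 : Real.log u ^ 5 ≤ 3125 * u := by
    have := pow_le_pow_left₀ hlr0 hlr 5
    rw [hr5] at this
    calc Real.log u ^ 5 = 3125 * Real.log r ^ 5 := by rw [hlog]; ring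
    _ ≤ 3125 * u := by nlinarith
  have : (k:ℝ) * (3125 * u) = 6250 * d := by
    rw [hu]; field_simp; ring
  nlinarith [mul_le_mul_of_nonneg_left h5 hk0.le]

/-- Pointwise bound: `‖w‖_T² ≤ 125000 d + 4 ∑_j e^{w_j²/4}`. -/
lemma TnormSq_le {d : ℕ} (hd : 0 < d) (w : Fin d → ℝ) :
    TnormSq d w ≤ 125000 * d + 4 * ∑ j, Real.exp (w j ^ 2 / 4) := by
  have hne : Nonempty {S : Finset (Fin d) // S.Nonempty} :=
    ⟨⟨{⟨0, hd⟩}, Finset.singleton_nonempty _⟩⟩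
  refine ciSup_le fun S => ?_
  set k := (S : Finset (Fin d)).card with hkdef
  have hk1 : 1 ≤ k := Finset.card_pos.mpr S.2
  have hkd : k ≤ d := by
    have := Finset.card_le_univ (S : Finset (Fin d))
    simpa using this
  set L := Real.log (2 * d / k) with hLdef
  have hk0 : (0:ℝ) < k := by exact_mod_cast hk1
  have hL0 : 0 ≤ L := by
    apply Real.log_nonneg
    rw [le_div_iff₀ hk0]
    have : (k:ℝ) ≤ d := by exact_mod_cast hkd
    linarith
  set A := ∑ j ∈ (S : Finset (Fin d)), Real.exp (w j ^ 2 / 4) with hA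
  set B := ∑ j, Real.exp (w j ^ 2 / 4) with hB
  have hAB : A ≤ B := by
    apply Finset.sum_le_sum_of_subset_of_nonneg (Finset.subset_univ _)
    intros; positivity
  have hA0 : 0 ≤ A := Finset.sum_nonneg fun _ _ => by positivity
  have h1 : ∑ j ∈ (S : Finset (Fin d)), w j ^ 2 ≤
      ∑ j ∈ (S : Finset (Fin d)),
        ((4 * Real.exp (-(5 * L))) * Real.exp (w j ^ 2 / 4) + 20 * L) := by
    refine Finset.sum_le_sum fun j _ => ?_
    have h := aux_le_exp (w j ^ 2) (20 * L)
    rw [show (w j ^ 2 - 20 * L) / 4 = w j ^ 2 / 4 + (-(5 * L)) by ring, Real.exp_add] at h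
    nlinarith [h]
  rw [Finset.sum_add_distrib, ← Finset.mul_sum, Finset.sum_const, nsmul_eq_mul] at h1
  have hE1 : L ^ 4 * Real.exp (-(5 * L)) ≤ 1 := aux_L4 hL0
  have hkL : (k:ℝ) * L ^ 5 ≤ 6250 * d := aux_kL5 hk1 hkd
  have hL4 : (0:ℝ) ≤ L ^ 4 := by positivity
  have step1 := mul_le_mul_of_nonneg_left h1 hL4
  have step3 : (L ^ 4 * Real.exp (-(5 * L))) * A ≤ B := by
    nlinarith [Real.exp_pos (-(5 * L))]
  nlinarith [step1, step3, hkL]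

lemma sqrt_le_am {x d : ℝ} (hx : 0 ≤ x) (hd : 0 < d) :
    Real.sqrt x ≤ (x + d) / (2 * Real.sqrt d) := by
  have hsd : 0 < Real.sqrt d := Real.sqrt_pos.mpr hd
  rw [le_div_iff₀ (by positivity)]
  nlinarith [Real.sq_sqrt hx, Real.sq_sqrt hd.le, Real.sqrt_nonneg x,
    sq_nonneg (Real.sqrt x - Real.sqrt d)]

lemma TnormSq_nonneg {d : ℕ} (hd : 0 < d) (w : Fin d → ℝ) : 0 ≤ TnormSq d w := by
  have : Nonempty {S : Finset (Fin d) // S.Nonempty} :=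
    ⟨⟨{⟨0, hd⟩}, Finset.singleton_nonempty _⟩⟩
  refine le_ciSup_of_le (Set.Finite.bddAbove (Set.finite_range _))
    ⟨{⟨0, hd⟩}, Finset.singleton_nonempty _⟩ ?_
  positivity

lemma gauss_density_fun :
    (fun x : ℝ => Real.exp (x ^ 2 / 4) * gaussianPDFReal 0 1 x)
      = fun x => (Real.sqrt (2 * Real.pi))⁻¹ * Real.exp (-(1/4) * x ^ 2) := by
  funext x
  simp only [gaussianPDFReal, NNReal.coe_one, mul_one, sub_zero]
  rw [mul_comm, mul_assoc, ← Real.exp_add]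
  congr 1
  ring_nf

lemma gauss_integrable :
    Integrable (fun x : ℝ => Real.exp (x ^ 2 / 4)) (gaussianReal 0 1) := by
  rw [gaussianReal_of_var_ne_zero 0 one_ne_zero]
  rw [integrable_withDensity_iff (measurable_gaussianPDF 0 1)
    (Filter.Eventually.of_forall fun x => ENNReal.ofReal_lt_top)]
  have : (fun x : ℝ => Real.exp (x ^ 2 / 4) * (gaussianPDF 0 1 x).toReal)
      = fun x => (Real.sqrt (2 * Real.pi))⁻¹ * Real.exp (-(1/4) * x ^ 2) := by
    rw [← gauss_density_fun]
    funext x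
    rw [gaussianPDF, ENNReal.toReal_ofReal (gaussianPDFReal_nonneg 0 1 x)]
  rw [this]
  exact (integrable_exp_neg_mul_sq (by norm_num : (0:ℝ) < 1/4)).const_mul _

lemma gauss_integral :
    ∫ x, Real.exp (x ^ 2 / 4) ∂(gaussianReal 0 1) = Real.sqrt 2 := by
  rw [gaussianReal_of_var_ne_zero 0 one_ne_zero, gaussianPDF_def]
  have hmeas : Measurable fun x => Real.toNNReal (gaussianPDFReal 0 1 x) :=
    (measurable_gaussianPDFReal 0 1).real_toNNReal
  rw [show (fun x => ENNReal.ofReal (gaussianPDFReal 0 1 x))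
      = fun x => ((Real.toNNReal (gaussianPDFReal 0 1 x) : ℝ≥0) : ℝ≥0∞) from rfl]
  rw [integral_withDensity_eq_integral_smul hmeas]
  have : (fun x : ℝ => Real.toNNReal (gaussianPDFReal 0 1 x) • Real.exp (x ^ 2 / 4))
      = fun x => (Real.sqrt (2 * Real.pi))⁻¹ * Real.exp (-(1/4) * x ^ 2) := by
    rw [← gauss_density_fun]
    funext x
    rw [NNReal.smul_def, smul_eq_mul, Real.coe_toNNReal _ (gaussianPDFReal_nonneg 0 1 x),
      mul_comm]
  rw [this, integral_const_mul, integral_gaussian]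
  rw [show Real.pi / (1/4) = 4 * Real.pi by ring]
  rw [show (4 : ℝ) * Real.pi = 2^2 * Real.pi by norm_num]
  rw [Real.sqrt_mul (by norm_num : (0:ℝ) ≤ 2^2), Real.sqrt_sq (by norm_num : (0:ℝ) ≤ 2)]
  rw [Real.sqrt_mul (by norm_num : (0:ℝ) ≤ 2)]
  have hpi : 0 < Real.sqrt Real.pi := Real.sqrt_pos.mpr Real.pi_pos
  have h2 : 0 < Real.sqrt 2 := by positivity
  field_simp
  nlinarith [Real.sq_sqrt (by norm_num : (0:ℝ) ≤ 2), Real.sqrt_nonneg 2]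

lemma measurePreserving_eval_gauss {d : ℕ} (j : Fin d) :
    MeasurePreserving (fun w : Fin d → ℝ => w j)
      (Measure.pi fun _ : Fin d => gaussianReal 0 1) (gaussianReal 0 1) := by
  refine ⟨measurable_pi_apply j, ?_⟩
  refine Measure.ext fun s hs => ?_
  rw [Measure.map_apply (measurable_pi_apply j) hs]
  have hpre : (fun w : Fin d → ℝ => w j) ⁻¹' s
      = Set.pi Set.univ (Function.update (fun _ : Fin d => (Set.univ : Set ℝ)) j s) :=
    Set.eval_preimage
  rw [hpre, Measure.pi_pi]
  rw [Finset.prod_eq_single j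
    (fun i _ hij => by rw [Function.update_of_ne hij]; exact measure_univ)
    (fun h => absurd (Finset.mem_univ j) h)]
  rw [Function.update_self]

/-- For a standard Gaussian vector `w ~ N(0, I_d)`, `𝔼‖w‖_T ≤ C √d`. -/
theorem stmt2 :
    ∃ C : ℝ, 0 < C ∧ ∀ d : ℕ, 0 < d →
      ∫ w : Fin d → ℝ, Tnorm d w ∂(Measure.pi fun _ : Fin d => gaussianReal 0 1)
        ≤ C * Real.sqrt d := by
  refine ⟨70000, by norm_num, fun d hd => ?_⟩
  set μ := Measure.pi fun _ : Fin d => gaussianReal 0 1 with hμ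
  have hd0 : (0:ℝ) < d := by exact_mod_cast hd
  have hs0 : 0 < Real.sqrt d := Real.sqrt_pos.mpr hd0
  have hcont : Continuous fun x : ℝ => Real.exp (x ^ 2 / 4) := by continuity
  have hIntj : ∀ j : Fin d, Integrable (fun w : Fin d → ℝ => Real.exp (w j ^ 2 / 4)) μ :=
    fun j => ((measurePreserving_eval_gauss j).integrable_comp
      hcont.aestronglyMeasurable).mpr gauss_integrable
  have hIntsum : Integrable (fun w : Fin d → ℝ => ∑ j, Real.exp (w j ^ 2 / 4)) μ :=
    integrable_finset_sum _ fun j _ => hIntj j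
  have hg : Integrable (fun w : Fin d → ℝ =>
      (125001 * (d:ℝ) + 4 * ∑ j, Real.exp (w j ^ 2 / 4)) / (2 * Real.sqrt d)) μ :=
    ((integrable_const _).add (hIntsum.const_mul 4)).div_const _
  have hpt : ∀ w : Fin d → ℝ, Tnorm d w ≤
      (125001 * (d:ℝ) + 4 * ∑ j, Real.exp (w j ^ 2 / 4)) / (2 * Real.sqrt d) := by
    intro w
    refine (sqrt_le_am (TnormSq_nonneg hd w) hd0).trans ?_
    exact (div_le_div_iff_of_pos_right (by positivity)).mpr (by linarith [TnormSq_le hd w])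
  have hmono := integral_mono_of_nonneg
    (Filter.Eventually.of_forall fun w => Real.sqrt_nonneg (TnormSq d w)) hg
    (Filter.Eventually.of_forall hpt)
  refine hmono.trans ?_
  have hj : ∀ j : Fin d, ∫ w, Real.exp (w j ^ 2 / 4) ∂μ = Real.sqrt 2 := by
    intro j
    calc ∫ w, Real.exp (w j ^ 2 / 4) ∂μ
        = ∫ x, Real.exp (x ^ 2 / 4) ∂(μ.map (fun w => w j)) := by
          rw [integral_map (measurable_pi_apply j).aemeasurable hcont.aestronglyMeasurable]
      _ = Real.sqrt 2 := by rw [(measurePreserving_eval_gauss j).map_eq]; exact gauss_integral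
  rw [integral_div, integral_add (integrable_const _) (hIntsum.const_mul 4),
    integral_const, integral_const_mul, integral_finset_sum _ (fun j _ => hIntj j)]
  rw [Finset.sum_congr rfl (fun j _ => hj j), Finset.sum_const, nsmul_eq_mul]
  simp only [measure_univ, probReal_univ, ENNReal.toReal_one, smul_eq_mul, one_mul, Finset.card_univ,
    Fintype.card_fin]
  rw [div_le_iff₀ (by positivity)]
  have hdd : Real.sqrt d * Real.sqrt d = d := Real.mul_self_sqrt hd0.le
  have h2 : Real.sqrt 2 ≤ 2 := by
    nlinarith [Real.sq_sqrt (show (0:ℝ) ≤ 2 by norm_num), Real.sqrt_nonneg 2]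
  nlinarith [mul_le_mul_of_nonneg_left h2 hd0.le]
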